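/- arXiv:2309.02062 — 3 statements merged into one kernel-verified Lean document; each statement's English description precedes it below -/
import Mathlib

section
/- For n ≥ 5 and distinct vertices a,b,c,d of K_n, the subgraph of L(K_n) with edge set F_{a,b,c,d} = δ_{ab} ∪ δ_{ad} ∪ δ_{ac^-} ∪ K_{{a,b,c}} ∪ K_{{a,b,d}} ∪ K_{a,d,c^-} ∪ K_{b,c,d^-} is an interval-order graph with exactly 5(n-2) edges. -/
open SimpleGraph

/-- `G` is an interval graph: the intersection graph of a family of closed intervals. -/
def IsIntervalGraph {V : Type*} (G : SimpleGraph V) : Prop :=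
  ∃ lo hi : V → ℝ, (∀ v, lo v ≤ hi v) ∧ ∀ u v : V, u ≠ v →
    (G.Adj u v ↔ (Set.Icc (lo u) (hi u) ∩ Set.Icc (lo v) (hi v)).Nonempty)

/-- `G` is the intersection graph of axis-parallel boxes in `ℝ^d`. -/
def HasBoxRep {V : Type*} (G : SimpleGraph V) (d : ℕ) : Prop :=
  ∃ lo hi : V → Fin d → ℝ, (∀ v i, lo v i ≤ hi v i) ∧
    ∀ u v : V, u ≠ v →
      (G.Adj u v ↔ ∀ i, (Set.Icc (lo u i) (hi u i) ∩ Set.Icc (lo v i) (hi v i)).Nonempty)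

/-- The boxicity of a graph. -/
noncomputable def boxicity {V : Type*} (G : SimpleGraph V) : ℕ := sInf {d | HasBoxRep G d}

/-- The Kneser graph `KG(n,2)`. -/
def kneser2 (n : ℕ) : SimpleGraph {s : Finset (Fin n) // s.card = 2} where
  Adj a b := Disjoint a.1 b.1
  symm := ⟨fun a b h => h.symm⟩
  loopless := ⟨fun a h => by
    have h2 := a.2
    simp only [disjoint_self, Finset.bot_eq_empty] at h
    rw [h] at h2
    simp at h2⟩

/-- The out-neighborhood of `σ i` for a linear ordering `σ` of the vertices. -/
def Nplus {V : Type*} (G : SimpleGraph V) {n : ℕ} (σ : Fin n ≃ V) (i : Fin n) : Set V :=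
  {v | ∃ m : Fin n, i < m ∧ v = σ m ∧ G.Adj (σ i) (σ m)}

/-- `Vset G σ i` is the set `V_i` from the prefix-intersection construction:
common neighbors of `σ 0, …, σ i`. -/
def Vset {V : Type*} (G : SimpleGraph V) {n : ℕ} (σ : Fin n ≃ V) (i : Fin n) : Set V :=
  {w | ∀ j : Fin n, j ≤ i → G.Adj (σ j) w}

/-- The graph `G^σ` from the prefix-intersection construction. -/
def Gsigma {V : Type*} (G : SimpleGraph V) {n : ℕ} (σ : Fin n ≃ V) : SimpleGraph V :=
  SimpleGraph.fromRel (fun u v => ∃ i : Fin n, u = σ i ∧ v ∈ Vset G σ i)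

/-- The clique `Q_v` in `L(K_n)` on the edges incident to `v`. -/
def Qv {n : ℕ} (a : Fin n) : SimpleGraph {s : Finset (Fin n) // s.card = 2} :=
  SimpleGraph.fromRel (fun e f => a ∈ e.1 ∧ a ∈ f.1)

/-- The star `δ_{uv}` of the vertex `uv` in `L(K_n)`. -/
def Dstar {n : ℕ} (u v : Fin n) : SimpleGraph {s : Finset (Fin n) // s.card = 2} :=
  SimpleGraph.fromRel (fun e f => e.1 = {u, v} ∧ ¬ Disjoint e.1 f.1)

/-- The half-star `δ_{uv⁻}`: edges from `uv` to edges of `K_n` incident to `u`. -/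
def DstarHalf {n : ℕ} (u v : Fin n) : SimpleGraph {s : Finset (Fin n) // s.card = 2} :=
  SimpleGraph.fromRel (fun e f => e.1 = {u, v} ∧ u ∈ f.1)

/-- `K_U`: the edge set of `L(K_n[U])`. -/
def KU {n : ℕ} (U : Finset (Fin n)) : SimpleGraph {s : Finset (Fin n) // s.card = 2} :=
  SimpleGraph.fromRel (fun e f => e.1 ⊆ U ∧ f.1 ⊆ U ∧ ¬ Disjoint e.1 f.1)

/-- `K_{u,v,w⁻} = {(uv,uw), (uv,vw)}`. -/
def Kminus {n : ℕ} (u v w : Fin n) : SimpleGraph {s : Finset (Fin n) // s.card = 2} :=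
  SimpleGraph.fromRel (fun e f => e.1 = {u, v} ∧ (f.1 = {u, w} ∨ f.1 = {v, w}))

set_option maxHeartbeats 10000000

section AuxTypeC
variable {n : ℕ}

lemma notDisj (u v : Fin n) (t : Finset (Fin n)) :
    ¬ Disjoint ({u, v} : Finset (Fin n)) t ↔ u ∈ t ∨ v ∈ t := by
  simp [Finset.disjoint_insert_left, Finset.disjoint_singleton_left]
  tauto

lemma eq_pair_of_mem {s : Finset (Fin n)} (hs : s.card = 2) {x y : Fin n}
    (hx : x ∈ s) (hy : y ∈ s) (hxy : x ≠ y) : s = {x, y} := by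
  symm
  apply Finset.eq_of_subset_of_card_le
  · simp [Finset.insert_subset_iff, hx, hy]
  · rw [hs, Finset.card_pair hxy]

lemma mem_decomp {s : Finset (Fin n)} (hs : s.card = 2) {x : Fin n} (hx : x ∈ s) :
    ∃ y, y ≠ x ∧ s = {x, y} := by
  obtain ⟨u, v, huv, rfl⟩ := Finset.card_eq_two.1 hs
  rcases Finset.mem_insert.1 hx with rfl | h
  · exact ⟨v, fun h => huv h.symm, rfl⟩
  · rw [Finset.mem_singleton] at h; subst h
    exact ⟨u, huv, Finset.pair_comm u x⟩

lemma sub3 {s : Finset (Fin n)} (hs : s.card = 2) {x y z : Fin n} :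
    s ⊆ {x, y, z} ↔ s = {x, y} ∨ s = {x, z} ∨ s = {y, z} := by
  constructor
  · intro hsub
    obtain ⟨u, v, huv, rfl⟩ := Finset.card_eq_two.1 hs
    have hu : u ∈ ({x, y, z} : Finset (Fin n)) := hsub (by simp)
    have hv : v ∈ ({x, y, z} : Finset (Fin n)) := hsub (by simp)
    simp only [Finset.mem_insert, Finset.mem_singleton] at hu hv
    rcases hu with rfl | rfl | rfl <;> rcases hv with rfl | rfl | rfl <;>
      simp_all [Finset.pair_comm]
  · rintro (rfl | rfl | rfl) <;> intro w hw <;> simp at hw <;>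
      rcases hw with rfl | rfl <;> simp

/-- Characterization of adjacency in the type-C graph. -/
lemma adj_char (a b c d : Fin n) (hab : a ≠ b) (hac : a ≠ c) (had : a ≠ d)
    (hbc : b ≠ c) (hbd : b ≠ d) (hcd : c ≠ d)
    (e f : {s : Finset (Fin n) // s.card = 2}) :
    (Dstar a b ⊔ Dstar a d ⊔ DstarHalf a c ⊔ KU {a, b, c} ⊔ KU {a, b, d} ⊔
      Kminus a d c ⊔ Kminus b c d).Adj e f ↔ e ≠ f ∧
      ((e.1 = {a, b} ∧ (a ∈ f.1 ∨ b ∈ f.1)) ∨ (f.1 = {a, b} ∧ (a ∈ e.1 ∨ b ∈ e.1)) ∨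
       (e.1 = {a, d} ∧ (a ∈ f.1 ∨ d ∈ f.1)) ∨ (f.1 = {a, d} ∧ (a ∈ e.1 ∨ d ∈ e.1)) ∨
       (e.1 = {a, c} ∧ a ∈ f.1) ∨ (f.1 = {a, c} ∧ a ∈ e.1) ∨
       (e.1 = {a, c} ∧ f.1 = {b, c}) ∨ (f.1 = {a, c} ∧ e.1 = {b, c}) ∨
       (e.1 = {b, c} ∧ (f.1 = {b, d} ∨ f.1 = {c, d})) ∨
       (f.1 = {b, c} ∧ (e.1 = {b, d} ∨ e.1 = {c, d}))) := by
  simp only [sup_adj, Dstar, DstarHalf, KU, Kminus, fromRel_adj]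
  constructor
  · rintro ((((((⟨hne, h⟩ | ⟨hne, h⟩) | ⟨hne, h⟩) | ⟨hne, h⟩) | ⟨hne, h⟩) | ⟨hne, h⟩) |
      ⟨hne, h⟩) <;> refine ⟨hne, ?_⟩
    · -- Dstar a b
      rcases h with ⟨h1, h2⟩ | ⟨h1, h2⟩
      · exact Or.inl ⟨h1, (notDisj a b f.1).1 (h1 ▸ h2)⟩
      · exact Or.inr (Or.inl ⟨h1, (notDisj a b e.1).1 (h1 ▸ h2)⟩)
    · -- Dstar a d
      rcases h with ⟨h1, h2⟩ | ⟨h1, h2⟩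
      · exact Or.inr (Or.inr (Or.inl ⟨h1, (notDisj a d f.1).1 (h1 ▸ h2)⟩))
      · exact Or.inr (Or.inr (Or.inr (Or.inl ⟨h1, (notDisj a d e.1).1 (h1 ▸ h2)⟩)))
    · -- DstarHalf a c
      rcases h with ⟨h1, h2⟩ | ⟨h1, h2⟩
      · exact Or.inr <| Or.inr <| Or.inr <| Or.inr <| Or.inl ⟨h1, h2⟩
      · exact Or.inr <| Or.inr <| Or.inr <| Or.inr <| Or.inr <| Or.inl ⟨h1, h2⟩
    · -- KU {a,b,c}
      have hef : e.1 ≠ f.1 := fun hh => hne (Subtype.ext hh)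
      have h1 : e.1 ⊆ {a, b, c} := by rcases h with ⟨h1, _, _⟩ | ⟨_, h1, _⟩ <;> exact h1
      have h2 : f.1 ⊆ {a, b, c} := by rcases h with ⟨_, h2, _⟩ | ⟨h2, _, _⟩ <;> exact h2
      rw [sub3 e.2] at h1; rw [sub3 f.2] at h2
      clear h
      rcases h1 with h1 | h1 | h1 <;> rcases h2 with h2 | h2 | h2
      · exact absurd (h1.trans h2.symm) hef
      · exact Or.inl ⟨h1, Or.inl (by rw [h2]; simp)⟩
      · exact Or.inl ⟨h1, Or.inr (by rw [h2]; simp)⟩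
      · exact Or.inr <| Or.inl ⟨h2, Or.inl (by rw [h1]; simp)⟩
      · exact absurd (h1.trans h2.symm) hef
      · exact Or.inr <| Or.inr <| Or.inr <| Or.inr <| Or.inr <| Or.inr <| Or.inl ⟨h1, h2⟩
      · exact Or.inr <| Or.inl ⟨h2, Or.inr (by rw [h1]; simp)⟩
      · exact Or.inr <| Or.inr <| Or.inr <| Or.inr <| Or.inr <| Or.inr <| Or.inr <|
          Or.inl ⟨h2, h1⟩
      · exact absurd (h1.trans h2.symm) hef
    · -- KU {a,b,d}
      have hef : e.1 ≠ f.1 := fun hh => hne (Subtype.ext hh)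
      have h1 : e.1 ⊆ {a, b, d} := by rcases h with ⟨h1, _, _⟩ | ⟨_, h1, _⟩ <;> exact h1
      have h2 : f.1 ⊆ {a, b, d} := by rcases h with ⟨_, h2, _⟩ | ⟨h2, _, _⟩ <;> exact h2
      rw [sub3 e.2] at h1; rw [sub3 f.2] at h2
      clear h
      rcases h1 with h1 | h1 | h1 <;> rcases h2 with h2 | h2 | h2
      · exact absurd (h1.trans h2.symm) hef
      · exact Or.inl ⟨h1, Or.inl (by rw [h2]; simp)⟩
      · exact Or.inl ⟨h1, Or.inr (by rw [h2]; simp)⟩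
      · exact Or.inr <| Or.inl ⟨h2, Or.inl (by rw [h1]; simp)⟩
      · exact absurd (h1.trans h2.symm) hef
      · exact Or.inr <| Or.inr <| Or.inl ⟨h1, Or.inr (by rw [h2]; simp)⟩
      · exact Or.inr <| Or.inl ⟨h2, Or.inr (by rw [h1]; simp)⟩
      · exact Or.inr <| Or.inr <| Or.inr <| Or.inl ⟨h2, Or.inr (by rw [h1]; simp)⟩
      · exact absurd (h1.trans h2.symm) hef
    · -- Kminus a d c
      rcases h with ⟨h1, h2 | h2⟩ | ⟨h1, h2 | h2⟩
      · exact Or.inr <| Or.inr <| Or.inl ⟨h1, Or.inl (by rw [h2]; simp)⟩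
      · exact Or.inr <| Or.inr <| Or.inl ⟨h1, Or.inr (by rw [h2]; simp)⟩
      · exact Or.inr <| Or.inr <| Or.inr <| Or.inl ⟨h1, Or.inl (by rw [h2]; simp)⟩
      · exact Or.inr <| Or.inr <| Or.inr <| Or.inl ⟨h1, Or.inr (by rw [h2]; simp)⟩
    · -- Kminus b c d
      rcases h with ⟨h1, h2⟩ | ⟨h1, h2⟩
      · exact Or.inr <| Or.inr <| Or.inr <| Or.inr <| Or.inr <| Or.inr <| Or.inr <|
          Or.inr <| Or.inl ⟨h1, h2⟩
      · exact Or.inr <| Or.inr <| Or.inr <| Or.inr <| Or.inr <| Or.inr <| Or.inr <|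
          Or.inr <| Or.inr ⟨h1, h2⟩
  · rintro ⟨hne, h⟩
    rcases h with ⟨h1, h2⟩ | ⟨h1, h2⟩ | ⟨h1, h2⟩ | ⟨h1, h2⟩ | ⟨h1, h2⟩ | ⟨h1, h2⟩ |
      ⟨h1, h2⟩ | ⟨h1, h2⟩ | ⟨h1, h2 | h2⟩ | ⟨h1, h2 | h2⟩
    · exact Or.inl <| Or.inl <| Or.inl <| Or.inl <| Or.inl <| Or.inl
        ⟨hne, Or.inl ⟨h1, h1 ▸ (notDisj a b f.1).2 h2⟩⟩
    · exact Or.inl <| Or.inl <| Or.inl <| Or.inl <| Or.inl <| Or.inl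
        ⟨hne, Or.inr ⟨h1, h1 ▸ (notDisj a b e.1).2 h2⟩⟩
    · exact Or.inl <| Or.inl <| Or.inl <| Or.inl <| Or.inl <| Or.inr
        ⟨hne, Or.inl ⟨h1, h1 ▸ (notDisj a d f.1).2 h2⟩⟩
    · exact Or.inl <| Or.inl <| Or.inl <| Or.inl <| Or.inl <| Or.inr
        ⟨hne, Or.inr ⟨h1, h1 ▸ (notDisj a d e.1).2 h2⟩⟩
    · exact Or.inl <| Or.inl <| Or.inl <| Or.inl <| Or.inr ⟨hne, Or.inl ⟨h1, h2⟩⟩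
    · exact Or.inl <| Or.inl <| Or.inl <| Or.inl <| Or.inr ⟨hne, Or.inr ⟨h1, h2⟩⟩
    · -- e = ac, f = bc : KU {a,b,c}
      refine Or.inl <| Or.inl <| Or.inl <| Or.inr ⟨hne, Or.inl ⟨?_, ?_, ?_⟩⟩
      · rw [sub3 e.2]; tauto
      · rw [sub3 f.2]; tauto
      · rw [h1, h2, notDisj]; simp
    · refine Or.inl <| Or.inl <| Or.inl <| Or.inr ⟨hne, Or.inr ⟨?_, ?_, ?_⟩⟩
      · rw [sub3 f.2]; tauto
      · rw [sub3 e.2]; tauto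
      · rw [h1, h2, notDisj]; simp
    · exact Or.inr ⟨hne, Or.inl ⟨h1, Or.inl h2⟩⟩
    · exact Or.inr ⟨hne, Or.inl ⟨h1, Or.inr h2⟩⟩
    · exact Or.inr ⟨hne, Or.inr ⟨h1, Or.inl h2⟩⟩
    · exact Or.inr ⟨hne, Or.inr ⟨h1, Or.inr h2⟩⟩

lemma pair_eq_pair_iff' (x y z w : Fin n) :
    ({x, y} : Finset (Fin n)) = {z, w} ↔ (x = z ∧ y = w) ∨ (x = w ∧ y = z) := by
  constructor
  · intro h
    have hx : x ∈ ({z, w} : Finset (Fin n)) := h ▸ (by simp)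
    have hw : w ∈ ({x, y} : Finset (Fin n)) := h.symm ▸ (by simp)
    have hz : z ∈ ({x, y} : Finset (Fin n)) := by rw [h]; simp
    have hy' : y ∈ ({z, w} : Finset (Fin n)) := by rw [← h]; simp
    simp only [Finset.mem_insert, Finset.mem_singleton] at hx hz hw hy'
    clear h
    rcases hx with hx | hx <;> rcases hy' with hy | hy <;> rcases hz with hz | hz <;>
      rcases hw with hw | hw <;> subst_vars <;> simp
  · rintro (⟨rfl, rfl⟩ | ⟨rfl, rfl⟩)
    · rfl
    · exact Finset.pair_comm _ _

/-- The vertex `{u,v}` of the line graph. -/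
def pairV {u v : Fin n} (h : u ≠ v) : {s : Finset (Fin n) // s.card = 2} :=
  ⟨{u, v}, Finset.card_pair h⟩

/-- `{u,x}` as a vertex, with junk value `j` if `u = x`. -/
def mkE (u x : Fin n) (j : {s : Finset (Fin n) // s.card = 2}) :
    {s : Finset (Fin n) // s.card = 2} :=
  if h : ({u, x} : Finset (Fin n)).card = 2 then ⟨_, h⟩ else j

lemma mkE_val {u x : Fin n} (h : u ≠ x) (j : {s : Finset (Fin n) // s.card = 2}) :
    (mkE u x j).1 = {u, x} := by
  rw [mkE, dif_pos (Finset.card_pair h)]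

lemma inj_helper {u : Fin n} {c j : {s : Finset (Fin n) // s.card = 2}} {A : Set (Fin n)}
    (hA : ∀ x ∈ A, x ≠ u) :
    Set.InjOn (fun x => s(c, mkE u x j)) A := by
  intro x hx y hy h
  simp only [Sym2.eq_iff] at h
  have hxu := hA x hx
  have hyu := hA y hy
  have key : mkE u x j = mkE u y j := by
    rcases h with ⟨-, h2⟩ | ⟨h2, h3⟩
    · exact h2
    · exact h3.trans h2
  have hval : ({u, x} : Finset (Fin n)) = {u, y} := by
    rw [← mkE_val (Ne.symm hxu) j, ← mkE_val (Ne.symm hyu) j, key]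
  rcases (pair_eq_pair_iff' u x u y).1 hval with ⟨-, h5⟩ | ⟨h5, h6⟩
  · exact h5
  · exact absurd h6 hxu


lemma ncard_ne2 (u v : Fin n) (huv : u ≠ v) :
    {x : Fin n | x ≠ u ∧ x ≠ v}.ncard = n - 2 := by
  have hset : {x : Fin n | x ≠ u ∧ x ≠ v} = ({u, v} : Set (Fin n))ᶜ := by
    ext x; simp [not_or]
  have h1 := Set.ncard_add_ncard_compl ({u, v} : Set (Fin n))
  rw [Set.ncard_pair huv] at h1
  have h2 : Nat.card (Fin n) = n := by simp
  rw [hset]; omega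

lemma ncard_ne3 (u v w : Fin n) (huv : u ≠ v) (huw : u ≠ w) (hvw : v ≠ w) :
    {x : Fin n | x ≠ u ∧ x ≠ v ∧ x ≠ w}.ncard = n - 3 := by
  have hset : {x : Fin n | x ≠ u ∧ x ≠ v ∧ x ≠ w} = ({u, v, w} : Set (Fin n))ᶜ := by
    ext x; simp [not_or]
  have h1 := Set.ncard_add_ncard_compl ({u, v, w} : Set (Fin n))
  rw [Set.ncard_insert_of_notMem (by simp [huv, huw]), Set.ncard_pair hvw] at h1
  have h2 : Nat.card (Fin n) = n := by simp
  rw [hset]; omega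

lemma ncard_ne4 (u v w t : Fin n) (huv : u ≠ v) (huw : u ≠ w) (hut : u ≠ t)
    (hvw : v ≠ w) (hvt : v ≠ t) (hwt : w ≠ t) :
    {x : Fin n | x ≠ u ∧ x ≠ v ∧ x ≠ w ∧ x ≠ t}.ncard = n - 4 := by
  have hset : {x : Fin n | x ≠ u ∧ x ≠ v ∧ x ≠ w ∧ x ≠ t} =
      ({u, v, w, t} : Set (Fin n))ᶜ := by
    ext x; simp [not_or]
  have h1 := Set.ncard_add_ncard_compl ({u, v, w, t} : Set (Fin n))
  rw [Set.ncard_insert_of_notMem (by simp [huv, huw, hut]),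
    Set.ncard_insert_of_notMem (by simp [hvw, hvt]), Set.ncard_pair hwt] at h1
  have h2 : Nat.card (Fin n) = n := by simp
  rw [hset]; omega

section main
variable {a b c d : Fin n}

lemma count_edges (hn : 5 ≤ n) (hab : a ≠ b) (hac : a ≠ c) (had : a ≠ d)
    (hbc : b ≠ c) (hbd : b ≠ d) (hcd : c ≠ d) :
    (Dstar a b ⊔ Dstar a d ⊔ DstarHalf a c ⊔ KU {a, b, c} ⊔ KU {a, b, d} ⊔
      Kminus a d c ⊔ Kminus b c d).edgeSet.ncard = 5 * (n - 2) := by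
  have hba := hab.symm; have hca := hac.symm; have hda := had.symm
  have hcb := hbc.symm; have hdb := hbd.symm; have hdc := hcd.symm
  set j := pairV hab with hj
  set U1 : Set (Sym2 _) := (fun x => s(pairV hab, mkE a x j)) '' {x | x ≠ a ∧ x ≠ b} with hU1
  set U2 : Set (Sym2 _) := (fun x => s(pairV hab, mkE b x j)) '' {x | x ≠ a ∧ x ≠ b} with hU2
  set U3 : Set (Sym2 _) := (fun x => s(pairV had, mkE a x j)) ''
    {x | x ≠ a ∧ x ≠ b ∧ x ≠ d} with hU3
  set U4 : Set (Sym2 _) := (fun x => s(pairV had, mkE d x j)) '' {x | x ≠ a ∧ x ≠ d} with hU4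
  set U5 : Set (Sym2 _) := (fun x => s(pairV hac, mkE a x j)) ''
    {x | x ≠ a ∧ x ≠ b ∧ x ≠ c ∧ x ≠ d} with hU5
  set U6 : Set (Sym2 _) :=
    {s(pairV hac, pairV hbc), s(pairV hbc, pairV hbd), s(pairV hbc, pairV hcd)} with hU6
    -- the cover lemma
  have cover : ∀ e f : {s : Finset (Fin n) // s.card = 2}, e ≠ f →
      ((e.1 = {a, b} ∧ (a ∈ f.1 ∨ b ∈ f.1)) ∨
       (e.1 = {a, d} ∧ (a ∈ f.1 ∨ d ∈ f.1)) ∨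
       (e.1 = {a, c} ∧ a ∈ f.1) ∨
       (e.1 = {a, c} ∧ f.1 = {b, c}) ∨
       (e.1 = {b, c} ∧ (f.1 = {b, d} ∨ f.1 = {c, d}))) →
      s(e, f) ∈ U1 ∪ U2 ∪ U3 ∪ U4 ∪ U5 ∪ U6 := by
    intro e f hne hrow
    have hef : e.1 ≠ f.1 := fun hh => hne (Subtype.ext hh)
    rcases hrow with ⟨h1, h2 | h2⟩ | ⟨h1, h2 | h2⟩ | ⟨h1, h2⟩ | ⟨h1, h2⟩ | ⟨h1, h2 | h2⟩
    · -- e = ab, a ∈ f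
      obtain ⟨y, hy, hfy⟩ := mem_decomp f.2 h2
      have hyb : y ≠ b := by rintro rfl; exact hef (h1.trans hfy.symm)
      refine Or.inl <| Or.inl <| Or.inl <| Or.inl <| Or.inl ⟨y, ⟨hy, hyb⟩, ?_⟩
      have he : e = pairV hab := Subtype.ext h1
      have hf : f = mkE a y j := Subtype.ext (hfy.trans (mkE_val (Ne.symm hy) j).symm)
      rw [he, hf]
    · -- e = ab, b ∈ f
      obtain ⟨y, hy, hfy⟩ := mem_decomp f.2 h2
      have hya : y ≠ a := by
        intro h'
        apply hef
        rw [h1, hfy, h']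
        exact Finset.pair_comm a b
      refine Or.inl <| Or.inl <| Or.inl <| Or.inl <| Or.inr ⟨y, ⟨hya, hy⟩, ?_⟩
      have he : e = pairV hab := Subtype.ext h1
      have hf : f = mkE b y j := Subtype.ext (hfy.trans (mkE_val (Ne.symm hy) j).symm)
      rw [he, hf]
    · -- e = ad, a ∈ f
      obtain ⟨y, hy, hfy⟩ := mem_decomp f.2 h2
      have hyd : y ≠ d := by rintro rfl; exact hef (h1.trans hfy.symm)
      by_cases hyb : y = b
      · -- f = ab : edge ab–ad lies in U1 with x = d
        subst hyb
        refine Or.inl <| Or.inl <| Or.inl <| Or.inl <| Or.inl ⟨d, ⟨hda, hdb⟩, ?_⟩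
        have he : e = mkE a d j := Subtype.ext (h1.trans (mkE_val had j).symm)
        have hf : f = pairV hab := Subtype.ext hfy
        rw [he, hf, Sym2.eq_swap]
      · refine Or.inl <| Or.inl <| Or.inl <| Or.inr ⟨y, ⟨hy, hyb, hyd⟩, ?_⟩
        have he : e = pairV had := Subtype.ext h1
        have hf : f = mkE a y j := Subtype.ext (hfy.trans (mkE_val (Ne.symm hy) j).symm)
        rw [he, hf]
    · -- e = ad, d ∈ f
      obtain ⟨y, hy, hfy⟩ := mem_decomp f.2 h2
      have hya : y ≠ a := by
        intro h'
        apply hef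
        rw [h1, hfy, h']
        exact Finset.pair_comm a d
      refine Or.inl <| Or.inl <| Or.inr ⟨y, ⟨hya, hy⟩, ?_⟩
      have he : e = pairV had := Subtype.ext h1
      have hf : f = mkE d y j := Subtype.ext (hfy.trans (mkE_val (Ne.symm hy) j).symm)
      rw [he, hf]
    · -- e = ac, a ∈ f
      obtain ⟨y, hy, hfy⟩ := mem_decomp f.2 h2
      have hyc : y ≠ c := by rintro rfl; exact hef (h1.trans hfy.symm)
      by_cases hyb : y = b
      · -- f = ab : edge ab–ac in U1 with x = c
        subst hyb
        refine Or.inl <| Or.inl <| Or.inl <| Or.inl <| Or.inl ⟨c, ⟨hca, hcb⟩, ?_⟩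
        have he : e = mkE a c j := Subtype.ext (h1.trans (mkE_val hac j).symm)
        have hf : f = pairV hab := Subtype.ext hfy
        rw [he, hf, Sym2.eq_swap]
      · by_cases hyd : y = d
        · -- f = ad : edge ad–ac in U3 with x = c
          subst hyd
          refine Or.inl <| Or.inl <| Or.inl <| Or.inr ⟨c, ⟨hca, hcb, hcd⟩, ?_⟩
          have he : e = mkE a c j := Subtype.ext (h1.trans (mkE_val hac j).symm)
          have hf : f = pairV had := Subtype.ext hfy
          rw [he, hf, Sym2.eq_swap]
        · refine Or.inl <| Or.inr ⟨y, ⟨hy, hyb, hyc, hyd⟩, ?_⟩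
          have he : e = pairV hac := Subtype.ext h1
          have hf : f = mkE a y j := Subtype.ext (hfy.trans (mkE_val (Ne.symm hy) j).symm)
          rw [he, hf]
    · -- e = ac, f = bc
      refine Or.inr ?_
      have he : e = pairV hac := Subtype.ext h1
      have hf : f = pairV hbc := Subtype.ext h2
      rw [he, hf]; left; rfl
    · -- e = bc, f = bd
      refine Or.inr ?_
      have he : e = pairV hbc := Subtype.ext h1
      have hf : f = pairV hbd := Subtype.ext h2
      rw [he, hf]; right; left; rfl
    · -- e = bc, f = cd
      refine Or.inr ?_
      have he : e = pairV hbc := Subtype.ext h1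
      have hf : f = pairV hcd := Subtype.ext h2
      rw [he, hf]; right; right; rfl
  have hES : (Dstar a b ⊔ Dstar a d ⊔ DstarHalf a c ⊔ KU {a, b, c} ⊔ KU {a, b, d} ⊔
      Kminus a d c ⊔ Kminus b c d).edgeSet = U1 ∪ U2 ∪ U3 ∪ U4 ∪ U5 ∪ U6 := by
    apply Set.Subset.antisymm
    · intro z hz
      induction z using Sym2.ind with
      | _ e f =>
        rw [mem_edgeSet, adj_char a b c d hab hac had hbc hbd hcd] at hz
        obtain ⟨hne, hrow⟩ := hz
        rcases hrow with h | h | h | h | h | h | h | h | h | h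
        · exact cover e f hne (Or.inl h)
        · rw [Sym2.eq_swap]; exact cover f e hne.symm (Or.inl h)
        · exact cover e f hne (Or.inr <| Or.inl h)
        · rw [Sym2.eq_swap]; exact cover f e hne.symm (Or.inr <| Or.inl h)
        · exact cover e f hne (Or.inr <| Or.inr <| Or.inl h)
        · rw [Sym2.eq_swap]; exact cover f e hne.symm (Or.inr <| Or.inr <| Or.inl h)
        · exact cover e f hne (Or.inr <| Or.inr <| Or.inr <| Or.inl h)
        · rw [Sym2.eq_swap]
          exact cover f e hne.symm (Or.inr <| Or.inr <| Or.inr <| Or.inl h)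
        · exact cover e f hne (Or.inr <| Or.inr <| Or.inr <| Or.inr h)
        · rw [Sym2.eq_swap]
          exact cover f e hne.symm (Or.inr <| Or.inr <| Or.inr <| Or.inr h)
    · -- each Ui consists of edges
      have hadj : ∀ e f : {s : Finset (Fin n) // s.card = 2}, e ≠ f →
          ((e.1 = {a, b} ∧ (a ∈ f.1 ∨ b ∈ f.1)) ∨
           (e.1 = {a, d} ∧ (a ∈ f.1 ∨ d ∈ f.1)) ∨
           (e.1 = {a, c} ∧ a ∈ f.1) ∨
           (e.1 = {a, c} ∧ f.1 = {b, c}) ∨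
           (e.1 = {b, c} ∧ (f.1 = {b, d} ∨ f.1 = {c, d}))) →
          s(e, f) ∈ (Dstar a b ⊔ Dstar a d ⊔ DstarHalf a c ⊔ KU {a, b, c} ⊔ KU {a, b, d} ⊔
            Kminus a d c ⊔ Kminus b c d).edgeSet := by
        intro e f hne hrow
        rw [mem_edgeSet, adj_char a b c d hab hac had hbc hbd hcd]
        refine ⟨hne, ?_⟩
        rcases hrow with h | h | h | h | h
        · exact Or.inl h
        · exact Or.inr <| Or.inr <| Or.inl h
        · exact Or.inr <| Or.inr <| Or.inr <| Or.inr <| Or.inl h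
        · exact Or.inr <| Or.inr <| Or.inr <| Or.inr <| Or.inr <| Or.inr <| Or.inl h
        · exact Or.inr <| Or.inr <| Or.inr <| Or.inr <| Or.inr <| Or.inr <| Or.inr <|
            Or.inr <| Or.inl h
      refine Set.union_subset (Set.union_subset (Set.union_subset (Set.union_subset
        (Set.union_subset ?_ ?_) ?_) ?_) ?_) ?_
      · rintro z ⟨x, ⟨hxa, hxb⟩, rfl⟩
        refine hadj _ _ ?_ (Or.inl ⟨rfl, Or.inl ?_⟩)
        · intro hh
          rw [Subtype.ext_iff, pairV, mkE_val (Ne.symm hxa)] at hh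
          rcases (pair_eq_pair_iff' a b a x).1 hh with ⟨-, h5⟩ | ⟨h5, -⟩
          · exact hxb h5.symm
          · exact hxa h5.symm
        · rw [mkE_val (Ne.symm hxa)]; simp
      · rintro z ⟨x, ⟨hxa, hxb⟩, rfl⟩
        refine hadj _ _ ?_ (Or.inl ⟨rfl, Or.inr ?_⟩)
        · intro hh
          rw [Subtype.ext_iff, pairV, mkE_val (Ne.symm hxb)] at hh
          rcases (pair_eq_pair_iff' a b b x).1 hh with ⟨h5, -⟩ | ⟨h5, -⟩
          · exact hab h5
          · exact hxa h5.symm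
        · rw [mkE_val (Ne.symm hxb)]; simp
      · rintro z ⟨x, ⟨hxa, hxb, hxd⟩, rfl⟩
        refine hadj _ _ ?_ (Or.inr <| Or.inl ⟨rfl, Or.inl ?_⟩)
        · intro hh
          rw [Subtype.ext_iff, pairV, mkE_val (Ne.symm hxa)] at hh
          rcases (pair_eq_pair_iff' a d a x).1 hh with ⟨-, h5⟩ | ⟨h5, -⟩
          · exact hxd h5.symm
          · exact hxa h5.symm
        · rw [mkE_val (Ne.symm hxa)]; simp
      · rintro z ⟨x, ⟨hxa, hxd⟩, rfl⟩
        refine hadj _ _ ?_ (Or.inr <| Or.inl ⟨rfl, Or.inr ?_⟩)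
        · intro hh
          rw [Subtype.ext_iff, pairV, mkE_val (Ne.symm hxd)] at hh
          rcases (pair_eq_pair_iff' a d d x).1 hh with ⟨h5, -⟩ | ⟨h5, -⟩
          · exact had h5
          · exact hxa h5.symm
        · rw [mkE_val (Ne.symm hxd)]; simp
      · rintro z ⟨x, ⟨hxa, hxb, hxc, hxd⟩, rfl⟩
        refine hadj _ _ ?_ (Or.inr <| Or.inr <| Or.inl ⟨rfl, ?_⟩)
        · intro hh
          rw [Subtype.ext_iff, pairV, mkE_val (Ne.symm hxa)] at hh
          rcases (pair_eq_pair_iff' a c a x).1 hh with ⟨-, h5⟩ | ⟨h5, -⟩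
          · exact hxc h5.symm
          · exact hxa h5.symm
        · rw [mkE_val (Ne.symm hxa)]; simp
      · intro z hz
        simp only [hU6, Set.mem_insert_iff, Set.mem_singleton_iff] at hz
        rcases hz with rfl | rfl | rfl
        · refine hadj _ _ ?_ (Or.inr <| Or.inr <| Or.inr <| Or.inl ⟨rfl, rfl⟩)
          intro hh
          rw [Subtype.ext_iff, pairV, pairV] at hh
          rcases (pair_eq_pair_iff' a c b c).1 hh with ⟨h5, -⟩ | ⟨h5, -⟩
          · exact hab h5
          · exact hac h5
        · refine hadj _ _ ?_ (Or.inr <| Or.inr <| Or.inr <| Or.inr ⟨rfl, Or.inl rfl⟩)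
          intro hh
          rw [Subtype.ext_iff, pairV, pairV] at hh
          rcases (pair_eq_pair_iff' b c b d).1 hh with ⟨-, h5⟩ | ⟨h5, -⟩
          · exact hcd h5
          · exact hbd h5
        · refine hadj _ _ ?_ (Or.inr <| Or.inr <| Or.inr <| Or.inr ⟨rfl, Or.inr rfl⟩)
          intro hh
          rw [Subtype.ext_iff, pairV, pairV] at hh
          rcases (pair_eq_pair_iff' b c c d).1 hh with ⟨h5, -⟩ | ⟨h5, -⟩
          · exact hbc h5
          · exact hbd h5
  rw [hES]
  have D12 : Disjoint U1 U2 := by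
    rw [hU1, hU2]
    refine Set.disjoint_image_image ?_
    rintro x ⟨hxa, hxb⟩ y ⟨hya, hyb⟩ heq
    simp only [Sym2.eq_iff, Subtype.ext_iff, pairV, mkE_val (Ne.symm hxa) j,
      mkE_val (Ne.symm hyb) j, pair_eq_pair_iff', hab, hac, had, hbc, hbd, hcd, hba, hca, hda, hcb, hdb, hdc,
      hxa, hxb, hya, hyb,
      Ne.symm hxa, Ne.symm hxb,
      Ne.symm hya, Ne.symm hyb] at heq
    tauto
  have D13 : Disjoint U1 U3 := by
    rw [hU1, hU3]
    refine Set.disjoint_image_image ?_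
    rintro x ⟨hxa, hxb⟩ y ⟨hya, hyb, hyd⟩ heq
    simp only [Sym2.eq_iff, Subtype.ext_iff, pairV, mkE_val (Ne.symm hxa) j,
      mkE_val (Ne.symm hya) j, pair_eq_pair_iff', hab, hac, had, hbc, hbd, hcd, hba, hca, hda, hcb, hdb, hdc,
      hxa, hxb, hya, hyb, hyd,
      Ne.symm hxa, Ne.symm hxb,
      Ne.symm hya, Ne.symm hyb, Ne.symm hyd] at heq
    tauto
  have D14 : Disjoint U1 U4 := by
    rw [hU1, hU4]
    refine Set.disjoint_image_image ?_
    rintro x ⟨hxa, hxb⟩ y ⟨hya, hyd⟩ heq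
    simp only [Sym2.eq_iff, Subtype.ext_iff, pairV, mkE_val (Ne.symm hxa) j,
      mkE_val (Ne.symm hyd) j, pair_eq_pair_iff', hab, hac, had, hbc, hbd, hcd, hba, hca, hda, hcb, hdb, hdc,
      hxa, hxb, hya, hyd,
      Ne.symm hxa, Ne.symm hxb,
      Ne.symm hya, Ne.symm hyd] at heq
    tauto
  have D15 : Disjoint U1 U5 := by
    rw [hU1, hU5]
    refine Set.disjoint_image_image ?_
    rintro x ⟨hxa, hxb⟩ y ⟨hya, hyb, hyc, hyd⟩ heq
    simp only [Sym2.eq_iff, Subtype.ext_iff, pairV, mkE_val (Ne.symm hxa) j,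
      mkE_val (Ne.symm hya) j, pair_eq_pair_iff', hab, hac, had, hbc, hbd, hcd, hba, hca, hda, hcb, hdb, hdc,
      hxa, hxb, hya, hyb, hyc, hyd,
      Ne.symm hxa, Ne.symm hxb,
      Ne.symm hya, Ne.symm hyb, Ne.symm hyc, Ne.symm hyd] at heq
    tauto
  have D23 : Disjoint U2 U3 := by
    rw [hU2, hU3]
    refine Set.disjoint_image_image ?_
    rintro x ⟨hxa, hxb⟩ y ⟨hya, hyb, hyd⟩ heq
    simp only [Sym2.eq_iff, Subtype.ext_iff, pairV, mkE_val (Ne.symm hxb) j,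
      mkE_val (Ne.symm hya) j, pair_eq_pair_iff', hab, hac, had, hbc, hbd, hcd, hba, hca, hda, hcb, hdb, hdc,
      hxa, hxb, hya, hyb, hyd,
      Ne.symm hxa, Ne.symm hxb,
      Ne.symm hya, Ne.symm hyb, Ne.symm hyd] at heq
    tauto
  have D24 : Disjoint U2 U4 := by
    rw [hU2, hU4]
    refine Set.disjoint_image_image ?_
    rintro x ⟨hxa, hxb⟩ y ⟨hya, hyd⟩ heq
    simp only [Sym2.eq_iff, Subtype.ext_iff, pairV, mkE_val (Ne.symm hxb) j,
      mkE_val (Ne.symm hyd) j, pair_eq_pair_iff', hab, hac, had, hbc, hbd, hcd, hba, hca, hda, hcb, hdb, hdc,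
      hxa, hxb, hya, hyd,
      Ne.symm hxa, Ne.symm hxb,
      Ne.symm hya, Ne.symm hyd] at heq
    tauto
  have D25 : Disjoint U2 U5 := by
    rw [hU2, hU5]
    refine Set.disjoint_image_image ?_
    rintro x ⟨hxa, hxb⟩ y ⟨hya, hyb, hyc, hyd⟩ heq
    simp only [Sym2.eq_iff, Subtype.ext_iff, pairV, mkE_val (Ne.symm hxb) j,
      mkE_val (Ne.symm hya) j, pair_eq_pair_iff', hab, hac, had, hbc, hbd, hcd, hba, hca, hda, hcb, hdb, hdc,
      hxa, hxb, hya, hyb, hyc, hyd,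
      Ne.symm hxa, Ne.symm hxb,
      Ne.symm hya, Ne.symm hyb, Ne.symm hyc, Ne.symm hyd] at heq
    tauto
  have D34 : Disjoint U3 U4 := by
    rw [hU3, hU4]
    refine Set.disjoint_image_image ?_
    rintro x ⟨hxa, hxb, hxd⟩ y ⟨hya, hyd⟩ heq
    simp only [Sym2.eq_iff, Subtype.ext_iff, pairV, mkE_val (Ne.symm hxa) j,
      mkE_val (Ne.symm hyd) j, pair_eq_pair_iff', hab, hac, had, hbc, hbd, hcd, hba, hca, hda, hcb, hdb, hdc,
      hxa, hxb, hxd, hya, hyd,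
      Ne.symm hxa, Ne.symm hxb, Ne.symm hxd,
      Ne.symm hya, Ne.symm hyd] at heq
    tauto
  have D35 : Disjoint U3 U5 := by
    rw [hU3, hU5]
    refine Set.disjoint_image_image ?_
    rintro x ⟨hxa, hxb, hxd⟩ y ⟨hya, hyb, hyc, hyd⟩ heq
    simp only [Sym2.eq_iff, Subtype.ext_iff, pairV, mkE_val (Ne.symm hxa) j,
      mkE_val (Ne.symm hya) j, pair_eq_pair_iff', hab, hac, had, hbc, hbd, hcd, hba, hca, hda, hcb, hdb, hdc,
      hxa, hxb, hxd, hya, hyb, hyc, hyd,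
      Ne.symm hxa, Ne.symm hxb, Ne.symm hxd,
      Ne.symm hya, Ne.symm hyb, Ne.symm hyc, Ne.symm hyd] at heq
    tauto
  have D45 : Disjoint U4 U5 := by
    rw [hU4, hU5]
    refine Set.disjoint_image_image ?_
    rintro x ⟨hxa, hxd⟩ y ⟨hya, hyb, hyc, hyd⟩ heq
    simp only [Sym2.eq_iff, Subtype.ext_iff, pairV, mkE_val (Ne.symm hxd) j,
      mkE_val (Ne.symm hya) j, pair_eq_pair_iff', hab, hac, had, hbc, hbd, hcd, hba, hca, hda, hcb, hdb, hdc,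
      hxa, hxd, hya, hyb, hyc, hyd,
      Ne.symm hxa, Ne.symm hxd,
      Ne.symm hya, Ne.symm hyb, Ne.symm hyc, Ne.symm hyd] at heq
    tauto
  have D16 : Disjoint U1 U6 := by
    rw [hU1, hU6, Set.disjoint_left]
    rintro z ⟨x, ⟨hxa, hxb⟩, rfl⟩ hz
    simp only [Set.mem_insert_iff, Set.mem_singleton_iff, Sym2.eq_iff, Subtype.ext_iff,
      pairV, mkE_val (Ne.symm hxa) j, pair_eq_pair_iff', hab, hac, had, hbc, hbd, hcd, hba, hca, hda, hcb, hdb, hdc,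
      hxa, hxb, Ne.symm hxa, Ne.symm hxb] at hz
    tauto
  have D26 : Disjoint U2 U6 := by
    rw [hU2, hU6, Set.disjoint_left]
    rintro z ⟨x, ⟨hxa, hxb⟩, rfl⟩ hz
    simp only [Set.mem_insert_iff, Set.mem_singleton_iff, Sym2.eq_iff, Subtype.ext_iff,
      pairV, mkE_val (Ne.symm hxb) j, pair_eq_pair_iff', hab, hac, had, hbc, hbd, hcd, hba, hca, hda, hcb, hdb, hdc,
      hxa, hxb, Ne.symm hxa, Ne.symm hxb] at hz
    tauto
  have D36 : Disjoint U3 U6 := by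
    rw [hU3, hU6, Set.disjoint_left]
    rintro z ⟨x, ⟨hxa, hxb, hxd⟩, rfl⟩ hz
    simp only [Set.mem_insert_iff, Set.mem_singleton_iff, Sym2.eq_iff, Subtype.ext_iff,
      pairV, mkE_val (Ne.symm hxa) j, pair_eq_pair_iff', hab, hac, had, hbc, hbd, hcd, hba, hca, hda, hcb, hdb, hdc,
      hxa, hxb, hxd, Ne.symm hxa, Ne.symm hxb, Ne.symm hxd] at hz
    tauto
  have D46 : Disjoint U4 U6 := by
    rw [hU4, hU6, Set.disjoint_left]
    rintro z ⟨x, ⟨hxa, hxd⟩, rfl⟩ hz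
    simp only [Set.mem_insert_iff, Set.mem_singleton_iff, Sym2.eq_iff, Subtype.ext_iff,
      pairV, mkE_val (Ne.symm hxd) j, pair_eq_pair_iff', hab, hac, had, hbc, hbd, hcd, hba, hca, hda, hcb, hdb, hdc,
      hxa, hxd, Ne.symm hxa, Ne.symm hxd] at hz
    tauto
  have D56 : Disjoint U5 U6 := by
    rw [hU5, hU6, Set.disjoint_left]
    rintro z ⟨x, ⟨hxa, hxb, hxc, hxd⟩, rfl⟩ hz
    simp only [Set.mem_insert_iff, Set.mem_singleton_iff, Sym2.eq_iff, Subtype.ext_iff,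
      pairV, mkE_val (Ne.symm hxa) j, pair_eq_pair_iff', hab, hac, had, hbc, hbd, hcd, hba, hca, hda, hcb, hdb, hdc,
      hxa, hxb, hxc, hxd, Ne.symm hxa, Ne.symm hxb, Ne.symm hxc, Ne.symm hxd] at hz
    tauto
  have I1 : U1.ncard = n - 2 := by
    rw [hU1, Set.ncard_image_of_injOn (inj_helper (fun x hx => hx.1)),
      ncard_ne2 a b hab]
  have I2 : U2.ncard = n - 2 := by
    rw [hU2, Set.ncard_image_of_injOn (inj_helper (fun x hx => hx.2)),
      ncard_ne2 a b hab]
  have I3 : U3.ncard = n - 3 := by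
    rw [hU3, Set.ncard_image_of_injOn (inj_helper (fun x hx => hx.1)),
      ncard_ne3 a b d hab had hbd]
  have I4 : U4.ncard = n - 2 := by
    rw [hU4, Set.ncard_image_of_injOn (inj_helper (fun x hx => hx.2)),
      ncard_ne2 a d had]
  have I5 : U5.ncard = n - 4 := by
    rw [hU5, Set.ncard_image_of_injOn (inj_helper (fun x hx => hx.1)),
      ncard_ne4 a b c d hab hac had hbc hbd hcd]
  have I6 : U6.ncard = 3 := by
    rw [hU6]
    have e1 : s(pairV hac, pairV hbc) ∉
        ({s(pairV hbc, pairV hbd), s(pairV hbc, pairV hcd)} :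
          Set (Sym2 {s : Finset (Fin n) // s.card = 2})) := by
      simp only [Set.mem_insert_iff, Set.mem_singleton_iff, Sym2.eq_iff, Subtype.ext_iff,
        pairV, pair_eq_pair_iff', hab, hac, had, hbc, hbd, hcd, hba, hca, hda, hcb, hdb, hdc]
      tauto
    have e2 : s(pairV hbc, pairV hbd) ≠ s(pairV hbc, pairV hcd) := by
      simp only [ne_eq, Sym2.eq_iff, Subtype.ext_iff, pairV, pair_eq_pair_iff',
        hab, hac, had, hbc, hbd, hcd, hba, hca, hda, hcb, hdb, hdc]
      tauto
    rw [Set.ncard_insert_of_notMem e1, Set.ncard_pair e2]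
  have DIS3 : Disjoint (U1 ∪ U2) U3 := Set.disjoint_union_left.mpr ⟨D13, D23⟩
  have DIS4 : Disjoint (U1 ∪ U2 ∪ U3) U4 :=
    Set.disjoint_union_left.mpr ⟨Set.disjoint_union_left.mpr ⟨D14, D24⟩, D34⟩
  have DIS5 : Disjoint (U1 ∪ U2 ∪ U3 ∪ U4) U5 :=
    Set.disjoint_union_left.mpr ⟨Set.disjoint_union_left.mpr
      ⟨Set.disjoint_union_left.mpr ⟨D15, D25⟩, D35⟩, D45⟩
  have DIS6 : Disjoint (U1 ∪ U2 ∪ U3 ∪ U4 ∪ U5) U6 :=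
    Set.disjoint_union_left.mpr ⟨Set.disjoint_union_left.mpr ⟨Set.disjoint_union_left.mpr
      ⟨Set.disjoint_union_left.mpr ⟨D16, D26⟩, D36⟩, D46⟩, D56⟩
  rw [Set.ncard_union_eq DIS6, Set.ncard_union_eq DIS5, Set.ncard_union_eq DIS4,
    Set.ncard_union_eq DIS3, Set.ncard_union_eq D12, I1, I2, I3, I4, I5, I6]
  omega


end main
end AuxTypeC

lemma interval_part {n : ℕ} (a b c d : Fin n)
    (hdist : ([a, b, c, d] : List (Fin n)).Nodup) :
    IsIntervalGraph (Dstar a b ⊔ Dstar a d ⊔ DstarHalf a c ⊔ KU {a, b, c} ⊔ KU {a, b, d} ⊔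
      Kminus a d c ⊔ Kminus b c d)ᶜ := by
  simp only [List.nodup_cons, List.mem_cons, List.mem_singleton, List.not_mem_nil] at hdist
  have hab : a ≠ b := by tauto
  have hac : a ≠ c := by tauto
  have had : a ≠ d := by tauto
  have hbc : b ≠ c := by tauto
  have hbd : b ≠ d := by tauto
  have hcd : c ≠ d := by tauto
  have hba := hab.symm; have hca := hac.symm; have hda := had.symm
  have hcb := hbc.symm; have hdb := hbd.symm; have hdc := hcd.symm
  refine ⟨fun v => if v.1 = {a, b} then 0 else if v.1 = {a, d} then 4 else
      if v.1 = {a, c} then 1 else if v.1 = {b, c} then 3 else if v.1 = {b, d} then 1 else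
      if v.1 = {c, d} then 0 else if a ∈ v.1 then 2 else if b ∈ v.1 then 1 else 0,
    fun v => if v.1 = {a, b} then 0 else if v.1 = {a, d} then 4 else
      if v.1 = {a, c} then 1 else if v.1 = {b, c} then 4 else if v.1 = {b, d} then 2 else
      if v.1 = {c, d} then 2 else if a ∈ v.1 then 3 else if b ∈ v.1 then 4 else
      if d ∈ v.1 then 3 else 4, ?_, ?_⟩
  · intro v; dsimp only; split_ifs <;> norm_num
  · intro u v huv
    have hne' : u.1 ≠ v.1 := fun h => huv (Subtype.ext h)
    have hbdu : b ∈ u.1 → d ∈ u.1 → u.1 = {b, d} := fun h h' => eq_pair_of_mem u.2 h h' hbd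
    have hbdv : b ∈ v.1 → d ∈ v.1 → v.1 = {b, d} := fun h h' => eq_pair_of_mem v.2 h h' hbd
    rw [compl_adj, adj_char a b c d hab hac had hbc hbd hcd]
    rw [Set.Icc_inter_Icc, Set.nonempty_Icc]
    simp only [ne_eq, huv, not_false_eq_true, true_and]
    split_ifs <;>
      simp_all only [pair_eq_pair_iff', Finset.mem_insert, Finset.mem_singleton,
        not_true_eq_false, not_false_eq_true, true_and, false_and, and_true, and_false,
        true_or, or_true, false_or, or_false, and_self, or_self, not_or, ne_eq,
        not_and, IsEmpty.forall_iff, forall_true_left, iff_true, iff_false, not_not] <;>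
      norm_num <;>
      tauto

/-- The subgraph of `L(K_n)` with edge set `F_{a,b,c,d}` is an interval-order graph with
`5(n-2)` edges. -/
theorem type_c_interval_order (n : ℕ) (hn : 5 ≤ n) (a b c d : Fin n)
    (hdist : ([a, b, c, d] : List (Fin n)).Nodup) :
    IsIntervalGraph (Dstar a b ⊔ Dstar a d ⊔ DstarHalf a c ⊔ KU {a, b, c} ⊔ KU {a, b, d} ⊔
      Kminus a d c ⊔ Kminus b c d)ᶜ ∧
    (Dstar a b ⊔ Dstar a d ⊔ DstarHalf a c ⊔ KU {a, b, c} ⊔ KU {a, b, d} ⊔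
      Kminus a d c ⊔ Kminus b c d).edgeSet.ncard = 5 * (n - 2) := by
  have hd := hdist
  simp only [List.nodup_cons, List.mem_cons, List.mem_singleton, List.not_mem_nil] at hd
  have hab : a ≠ b := by tauto
  have hac : a ≠ c := by tauto
  have had : a ≠ d := by tauto
  have hbc : b ≠ c := by tauto
  have hbd : b ≠ d := by tauto
  have hcd : c ≠ d := by tauto
  exact ⟨interval_part a b c d hdist, count_edges hn hab hac had hbc hbd hcd⟩
end

section
/- Let G be a graph with maximal interval-order subgraph H = G^σ for an ordering σ with i-prefix (v_1,...,v_i). If u, v ∉ {v_1,...,v_i} satisfy N(u) ⊇ N(v) ∩ N^+(v_i), then there exists an ordering σ' with the same i-prefix such that G^{σ'} = H and u precedes v in σ'. -/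
open SimpleGraph

lemma gsigma_adj {V : Type*} (G : SimpleGraph V) {n : ℕ} (τ : Fin n ≃ V) {a b : Fin n}
    (hab : a < b) : (Gsigma G τ).Adj (τ a) (τ b) ↔ τ b ∈ Vset G τ a := by
  simp only [Gsigma, fromRel_adj]
  constructor
  · rintro ⟨hne, ⟨c, hc1, hc2⟩ | ⟨c, hc1, hc2⟩⟩
    · rwa [← τ.injective hc1] at hc2
    · have hcb : b = c := τ.injective hc1
      exact absurd (hc2 a (by rw [← hcb]; exact hab.le)) (G.irrefl)
  · intro h
    exact ⟨fun he => absurd (τ.injective he) hab.ne, Or.inl ⟨a, rfl, h⟩⟩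

lemma gsigma_le {V : Type*} (G : SimpleGraph V) {n : ℕ} (τ : Fin n ≃ V) :
    Gsigma G τ ≤ G := by
  intro x y h
  simp only [Gsigma, fromRel_adj] at h
  obtain ⟨hne, ⟨c, rfl, hc⟩ | ⟨c, rfl, hc⟩⟩ := h
  · exact hc c le_rfl
  · exact (hc c le_rfl).symm

lemma gsigma_compl_interval {V : Type*} (G : SimpleGraph V) {n : ℕ} (τ : Fin n ≃ V) :
    IsIntervalGraph (Gsigma G τ)ᶜ := by
  classical
  set S : V → Finset (Fin n) := fun x => Finset.univ.filter (fun j => ¬ G.Adj (τ j) x) with hSdef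
  have hmem : ∀ x, τ.symm x ∈ S x := by
    intro x
    simp [hSdef, Equiv.apply_symm_apply]
  set L : V → Fin n := fun x => (S x).min' ⟨_, hmem x⟩ with hLdef
  have hLle : ∀ x, L x ≤ τ.symm x := fun x => Finset.min'_le _ _ (hmem x)
  have hLspec : ∀ x, ¬ G.Adj (τ (L x)) x := by
    intro x
    have := (S x).min'_mem ⟨_, hmem x⟩
    simp only [hSdef, Finset.mem_filter] at this
    exact this.2
  have hkey : ∀ (x : V) (a : Fin n), L x ≤ a ↔ ∃ j, j ≤ a ∧ ¬ G.Adj (τ j) x := by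
    intro x a
    constructor
    · intro h; exact ⟨L x, h, hLspec x⟩
    · rintro ⟨j, hj, hadj⟩
      exact le_trans (Finset.min'_le _ _ (by simp [hSdef, hadj])) hj
  have main : ∀ x y : V, τ.symm x < τ.symm y →
      (¬ (Gsigma G τ).Adj x y ↔ L y ≤ τ.symm x) := by
    intro x y hab
    rw [show x = τ (τ.symm x) from (τ.apply_symm_apply x).symm,
        show y = τ (τ.symm y) from (τ.apply_symm_apply y).symm] at hab ⊢
    simp only [Equiv.symm_apply_apply] at hab ⊢
    rw [gsigma_adj G τ hab, hkey]
    simp only [Vset, Set.mem_setOf_eq]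
    push_neg
    exact Iff.rfl
  refine ⟨fun x => ((L x : ℕ) : ℝ), fun x => ((τ.symm x : ℕ) : ℝ), ?_, ?_⟩
  · intro x
    show ((L x : ℕ) : ℝ) ≤ ((τ.symm x : ℕ) : ℝ)
    have := hLle x
    exact_mod_cast this
  · intro x y hxy
    rw [compl_adj]
    have hicc : ∀ x y : V, τ.symm x < τ.symm y →
        ((Set.Icc ((L x : ℕ) : ℝ) ((τ.symm x : ℕ) : ℝ) ∩
          Set.Icc ((L y : ℕ) : ℝ) ((τ.symm y : ℕ) : ℝ)).Nonempty ↔ L y ≤ τ.symm x) := by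
      intro x y hab
      rw [Set.Icc_inter_Icc, Set.nonempty_Icc]
      have h1 : ((L x : ℕ) : ℝ) ≤ ((τ.symm x : ℕ) : ℝ) := by
        exact_mod_cast (hLle x : (L x : ℕ) ≤ (τ.symm x : ℕ))
      have h2 : ((τ.symm x : ℕ) : ℝ) ≤ ((τ.symm y : ℕ) : ℝ) := by
        exact_mod_cast hab.le
      rw [sup_le_iff, le_inf_iff, le_inf_iff]
      have hcast : ((L y : ℕ) : ℝ) ≤ ((τ.symm x : ℕ) : ℝ) ↔ L y ≤ τ.symm x := by
        rw [Nat.cast_le]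
        exact ⟨fun h => h, fun h => h⟩
      constructor
      · rintro ⟨_, hy1, _⟩
        exact hcast.mp hy1
      · intro h
        exact ⟨⟨h1, le_trans h1 h2⟩, hcast.mpr h, le_trans (hcast.mpr h) h2⟩
    rcases lt_trichotomy (τ.symm x) (τ.symm y) with h | h | h
    · rw [hicc x y h, and_iff_right hxy, main x y h]
    · exact absurd (τ.symm.injective h) hxy
    · rw [Set.inter_comm, hicc y x h, and_iff_right hxy]
      rw [adj_comm]
      exact main y x h

def Fmap (q p x : ℕ) : ℕ := if x = q then p else if q < x ∧ x ≤ p then x - 1 else x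
def Gmap (q p x : ℕ) : ℕ := if x = p then q else if q ≤ x ∧ x < p then x + 1 else x

def cycEquiv {n : ℕ} (q p : Fin n) (hqp : q.1 < p.1) : Fin n ≃ Fin n where
  toFun j := ⟨Fmap q.1 p.1 j.1, by unfold Fmap; have := j.2; have := p.2; split_ifs <;> omega⟩
  invFun j := ⟨Gmap q.1 p.1 j.1, by unfold Gmap; have := j.2; have := p.2; split_ifs <;> omega⟩
  left_inv j := by
    apply Fin.ext
    show Gmap q.1 p.1 (Fmap q.1 p.1 j.1) = j.1
    unfold Fmap Gmap
    split_ifs <;> omega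
  right_inv j := by
    apply Fin.ext
    show Fmap q.1 p.1 (Gmap q.1 p.1 j.1) = j.1
    unfold Fmap Gmap
    split_ifs <;> omega

/-- Exchange property for maximal interval-order subgraphs built from a prefix. -/
theorem exists_ordering_with_prefix {V : Type*} [Fintype V] (G : SimpleGraph V)
    (σ : Fin (Fintype.card V) ≃ V) (i : Fin (Fintype.card V))
    (hmax : ∀ H', H' ≤ G → IsIntervalGraph H'ᶜ → Gsigma G σ ≤ H' → H' = Gsigma G σ)
    (u v : V) (hu : ∀ j, j ≤ i → σ j ≠ u) (hv : ∀ j, j ≤ i → σ j ≠ v) (huv : u ≠ v)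
    (hN : G.neighborSet v ∩ Vset G σ i ⊆ G.neighborSet u) :
    ∃ σ' : Fin (Fintype.card V) ≃ V, (∀ j, j ≤ i → σ' j = σ j) ∧
      Gsigma G σ' = Gsigma G σ ∧
      ∃ p q : Fin (Fintype.card V), p < q ∧ σ' p = u ∧ σ' q = v := by
  classical
  set q₀ : Fin (Fintype.card V) := σ.symm v with hq₀
  set p₀ : Fin (Fintype.card V) := σ.symm u with hp₀
  have hσq : σ q₀ = v := σ.apply_symm_apply v
  have hσp : σ p₀ = u := σ.apply_symm_apply u
  have hiq : i.1 < q₀.1 := by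
    by_contra h
    push_neg at h
    exact hv q₀ (Fin.le_def.mpr h) hσq
  have hip : i.1 < p₀.1 := by
    by_contra h
    push_neg at h
    exact hu p₀ (Fin.le_def.mpr h) hσp
  have hpq : p₀ ≠ q₀ := fun h => huv (by rw [← hσp, h, hσq])
  rcases lt_or_gt_of_ne hpq with hlt | hgt
  · exact ⟨σ, fun j _ => rfl, rfl, p₀, q₀, hlt, hσp, hσq⟩
  · -- v comes before u; move u just in front of v
    have hqp : q₀.1 < p₀.1 := hgt
    have hpn : p₀.1 < Fintype.card V := p₀.2
    set ρ : Fin (Fintype.card V) ≃ Fin (Fintype.card V) := cycEquiv q₀ p₀ hqp with hρ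
    set σ' : Fin (Fintype.card V) ≃ V := ρ.trans σ with hσ'
    have hs'j : ∀ j : Fin (Fintype.card V), σ' j = σ (ρ j) := fun j => rfl
    have hρval : ∀ j : Fin (Fintype.card V), (ρ j).1 = Fmap q₀.1 p₀.1 j.1 := fun j => rfl
    have hρsval : ∀ j : Fin (Fintype.card V), (ρ.symm j).1 = Gmap q₀.1 p₀.1 j.1 :=
      fun j => rfl
    have hs' : ∀ c : Fin (Fintype.card V), σ' (ρ.symm c) = σ c := by
      intro c
      rw [hs'j, Equiv.apply_symm_apply]
    have hq0u : σ' q₀ = u := by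
      rw [hs'j]
      have : ρ q₀ = p₀ := by
        apply Fin.ext
        rw [hρval]
        show Fmap q₀.1 p₀.1 q₀.1 = p₀.1
        unfold Fmap
        split_ifs <;> omega
      rw [this, hσp]
    have step : ∀ a b : Fin (Fintype.card V), (ρ.symm a) < (ρ.symm b) →
        (∀ j : Fin (Fintype.card V), j ≤ ρ.symm a → G.Adj (σ' j) (σ b)) →
        (Gsigma G σ').Adj (σ a) (σ b) := by
      intro a b hord hadj
      have h2 : σ' (ρ.symm b) ∈ Vset G σ' (ρ.symm a) := by
        rw [hs']
        exact fun j hj => hadj j hj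
      have := (gsigma_adj G σ' hord).mpr h2
      rwa [hs' a, hs' b] at this
    have main : ∀ a b : Fin (Fintype.card V), a < b → σ b ∈ Vset G σ a →
        (Gsigma G σ').Adj (σ a) (σ b) := by
      intro a b hab hmem
      have hab' : a.1 < b.1 := Fin.lt_def.mp hab
      by_cases hA : a.1 < q₀.1 ∨ p₀.1 ≤ a.1
      · apply step a b
        · rw [Fin.lt_def, hρsval, hρsval]
          unfold Gmap
          split_ifs <;> omega
        · intro j hj
          have hjv : j.1 ≤ Gmap q₀.1 p₀.1 a.1 := by
            rw [← hρsval]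
            exact Fin.le_def.mp hj
          have hnlt : Fmap q₀.1 p₀.1 j.1 < Fintype.card V := by
            have := j.2
            unfold Fmap
            split_ifs <;> omega
          have hF : Fmap q₀.1 p₀.1 j.1 ≤ a.1 := by
            unfold Fmap
            unfold Gmap at hjv
            split_ifs at hjv ⊢ <;> omega
          exact hmem ⟨Fmap q₀.1 p₀.1 j.1, hnlt⟩ (Fin.le_def.mpr hF)
      · push_neg at hA
        obtain ⟨hq, hp⟩ := hA
        have hvadj : G.Adj v (σ b) := by
          have := hmem q₀ (Fin.le_def.mpr hq)
          rwa [hσq] at this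
        have hVi : σ b ∈ Vset G σ i := by
          intro j hj
          have hj' : j.1 ≤ i.1 := Fin.le_def.mp hj
          exact hmem j (Fin.le_def.mpr (by omega))
        have huadj : G.Adj u (σ b) := hN ⟨hvadj, hVi⟩
        have hbP : b.1 ≠ p₀.1 := by
          intro h
          have hb : b = p₀ := Fin.ext h
          rw [hb, hσp] at huadj
          exact G.irrefl huadj
        apply step a b
        · rw [Fin.lt_def, hρsval, hρsval]
          unfold Gmap
          split_ifs <;> omega
        · intro j hj
          have hjv : j.1 ≤ Gmap q₀.1 p₀.1 a.1 := by
            rw [← hρsval]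
            exact Fin.le_def.mp hj
          by_cases hjq : j.1 = q₀.1
          · have hjq' : j = q₀ := Fin.ext hjq
            rw [hjq', hq0u]
            exact huadj
          · have hnlt : Fmap q₀.1 p₀.1 j.1 < Fintype.card V := by
              have := j.2
              unfold Fmap
              split_ifs <;> omega
            have hF : Fmap q₀.1 p₀.1 j.1 ≤ a.1 := by
              unfold Fmap
              unfold Gmap at hjv
              split_ifs at hjv ⊢ <;> omega
            exact hmem ⟨Fmap q₀.1 p₀.1 j.1, hnlt⟩ (Fin.le_def.mpr hF)
    have hcontain : Gsigma G σ ≤ Gsigma G σ' := by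
      intro x y hxy
      have hx : σ (σ.symm x) = x := σ.apply_symm_apply x
      have hy : σ (σ.symm y) = y := σ.apply_symm_apply y
      rw [← hx, ← hy] at hxy ⊢
      rcases lt_trichotomy (σ.symm x) (σ.symm y) with h | h | h
      · exact main _ _ h ((gsigma_adj G σ h).mp hxy)
      · exact absurd (congrArg σ h) hxy.ne
      · exact (main _ _ h ((gsigma_adj G σ h).mp hxy.symm)).symm
    refine ⟨σ', ?_, ?_, q₀, ⟨q₀.1 + 1, by omega⟩, ?_, hq0u, ?_⟩
    · intro j hj
      rw [hs'j]
      have hρj : ρ j = j := by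
        apply Fin.ext
        rw [hρval]
        have hj' : j.1 ≤ i.1 := Fin.le_def.mp hj
        unfold Fmap
        split_ifs <;> omega
      rw [hρj]
    · exact hmax (Gsigma G σ') (gsigma_le G σ') (gsigma_compl_interval G σ') hcontain
    · exact Fin.lt_def.mpr (Nat.lt_succ_self q₀.1)
    · rw [hs'j]
      have hρ1 : ρ ⟨q₀.1 + 1, by omega⟩ = q₀ := by
        apply Fin.ext
        rw [hρval]
        show Fmap q₀.1 p₀.1 (q₀.1 + 1) = q₀.1
        unfold Fmap
        split_ifs <;> omega
      rw [hρ1, hσq]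
end

section
/- Let G be a graph and σ_i = (v_1,...,v_i) an i-prefix with |N^+(v_i)| = 2. Then there are at most two distinct inclusion-wise maximal interval-order subgraphs H of G of the form G^σ for orderings σ extending the prefix σ_i. -/
open SimpleGraph

namespace AtMostTwo

attribute [local instance] Classical.propDecidable

variable {V : Type*} [Fintype V]

noncomputable def fdrop {n : ℕ} (G : SimpleGraph V) (σ : Fin n ≃ V) (v : V) : ℕ :=
  Nat.find (p := fun m => ∃ hm : m < n, ¬ G.Adj (σ ⟨m, hm⟩) v)
    ⟨(σ.symm v).val, (σ.symm v).2, by simp⟩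

lemma fdrop_le {n : ℕ} (G : SimpleGraph V) (σ : Fin n ≃ V) (v : V) :
    fdrop G σ v ≤ (σ.symm v).val :=
  Nat.find_le ⟨(σ.symm v).2, by simp⟩

lemma lt_fdrop_iff {n : ℕ} (G : SimpleGraph V) (σ : Fin n ≃ V) (v : V) (m : ℕ) :
    m < fdrop G σ v ↔ ∀ l (hl : l < n), l ≤ m → G.Adj (σ ⟨l, hl⟩) v := by
  rw [fdrop, Nat.lt_find_iff]
  constructor
  · intro h l hl hlm
    by_contra hc
    exact h l hlm ⟨hl, hc⟩
  · rintro h l hlm ⟨hl, hc⟩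
    exact hc (h l hl hlm)

lemma gsigma_adj {n : ℕ} (G : SimpleGraph V) (σ : Fin n ≃ V) (u v : V) :
    (Gsigma G σ).Adj u v ↔ u ≠ v ∧
      ((σ.symm u).val < fdrop G σ v ∨ (σ.symm v).val < fdrop G σ u) := by
  have key : ∀ x y : V, (∃ i : Fin n, x = σ i ∧ y ∈ Vset G σ i) ↔
      (σ.symm x).val < fdrop G σ y := by
    intro x y
    constructor
    · rintro ⟨i, rfl, hmem⟩
      rw [Equiv.symm_apply_apply, lt_fdrop_iff]
      intro l hl hlm
      exact hmem ⟨l, hl⟩ (Fin.le_def.mpr hlm)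
    · intro h
      refine ⟨σ.symm x, (σ.apply_symm_apply x).symm, ?_⟩
      intro j hj
      have := (lt_fdrop_iff G σ y _).mp h j.val j.2 (Fin.le_def.mp hj)
      simpa using this
  rw [Gsigma, SimpleGraph.fromRel_adj, key, key]

lemma gsigma_le {n : ℕ} (G : SimpleGraph V) (σ : Fin n ≃ V) : Gsigma G σ ≤ G := by
  intro u v h
  rcases (SimpleGraph.fromRel_adj _ u v).mp h with ⟨hne, h | h⟩
  · rcases h with ⟨i, rfl, hm⟩
    exact hm i le_rfl
  · rcases h with ⟨i, rfl, hm⟩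
    exact (hm i le_rfl).symm

lemma gsigma_compl_interval {n : ℕ} (G : SimpleGraph V) (σ : Fin n ≃ V) :
    IsIntervalGraph (Gsigma G σ)ᶜ := by
  refine ⟨fun v => (fdrop G σ v : ℝ), fun v => ((σ.symm v).val : ℝ),
    fun v => by dsimp only; exact_mod_cast fdrop_le G σ v, ?_⟩
  intro u v huv
  rw [SimpleGraph.compl_adj, gsigma_adj]
  constructor
  · rintro ⟨-, h⟩
    rw [not_and, not_or] at h
    obtain ⟨h1, h2⟩ := h huv
    rw [not_lt] at h1 h2
    refine ⟨((max (fdrop G σ u) (fdrop G σ v) : ℕ) : ℝ), ⟨?_, ?_⟩, ?_, ?_⟩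
    · dsimp only; exact_mod_cast le_max_left _ _
    · dsimp only; exact_mod_cast max_le (fdrop_le G σ u) h1
    · dsimp only; exact_mod_cast le_max_right _ _
    · dsimp only; exact_mod_cast max_le h2 (fdrop_le G σ v)
  · rintro ⟨x, ⟨hx1, hx2⟩, hx3, hx4⟩
    refine ⟨huv, ?_⟩
    rintro ⟨-, h | h⟩
    · have : (fdrop G σ v : ℝ) ≤ ((σ.symm u).val : ℝ) := le_trans hx3 hx2
      exact absurd h (not_lt.mpr (by exact_mod_cast this))
    · have : (fdrop G σ u : ℝ) ≤ ((σ.symm v).val : ℝ) := le_trans hx1 hx4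
      exact absurd h (not_lt.mpr (by exact_mod_cast this))

variable (G : SimpleGraph V)

noncomputable def Pfin (σ₀ : Fin (Fintype.card V) ≃ V) (i : Fin (Fintype.card V)) : Finset V :=
  (Finset.Iic i).image σ₀

noncomputable def Ca (σ₀ : Fin (Fintype.card V) ≃ V) (i : Fin (Fintype.card V)) (a b : V) :
    Finset V :=
  (Finset.univ.filter fun u => G.Adj a u ∧ G.Adj b u) \ Pfin σ₀ i

noncomputable def Bb (σ₀ : Fin (Fintype.card V) ≃ V) (i : Fin (Fintype.card V)) (b : V) :
    Finset V :=
  (Finset.univ.filter fun u => G.Adj b u) \ Pfin σ₀ i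

variable (σ₀ : Fin (Fintype.card V) ≃ V) (i : Fin (Fintype.card V)) (a b : V)

lemma mem_Pfin {v : V} : v ∈ Pfin σ₀ i ↔ ∃ j, j ≤ i ∧ σ₀ j = v := by
  simp [Pfin]

lemma mem_Ca {u : V} : u ∈ Ca G σ₀ i a b ↔ (G.Adj a u ∧ G.Adj b u) ∧ u ∉ Pfin σ₀ i := by
  rw [Ca, Finset.mem_sdiff, Finset.mem_filter]
  simp only [Finset.mem_univ, true_and]

lemma mem_Bb {u : V} : u ∈ Bb G σ₀ i b ↔ G.Adj b u ∧ u ∉ Pfin σ₀ i := by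
  rw [Bb, Finset.mem_sdiff, Finset.mem_filter]
  simp only [Finset.mem_univ, true_and]

noncomputable def block0 : List V :=
  List.ofFn (fun j : Fin (i.val + 1) =>
    σ₀ ⟨j.val, lt_of_le_of_lt (Nat.lt_succ_iff.mp j.2) i.2⟩)

lemma mem_block0 {v : V} : v ∈ block0 σ₀ i ↔ v ∈ Pfin σ₀ i := by
  rw [block0, List.mem_ofFn, mem_Pfin]
  constructor
  · rintro ⟨j, rfl⟩
    exact ⟨_, Fin.le_def.mpr (Nat.lt_succ_iff.mp j.2), rfl⟩
  · rintro ⟨j, hj, rfl⟩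
    exact ⟨⟨j.val, Nat.lt_succ_iff.mpr (Fin.le_def.mp hj)⟩, rfl⟩

lemma nodup_block0 : (block0 σ₀ i).Nodup := by
  rw [block0, List.nodup_ofFn]
  intro x y hxy
  have h2 : (x : ℕ) = (y : ℕ) := by simpa using σ₀.injective hxy
  exact Fin.ext h2

noncomputable def bigL : List V :=
  ((block0 σ₀ i ++ (Ca G σ₀ i a b).toList) ++ (Bb G σ₀ i b \ Ca G σ₀ i a b).toList)
    ++ (Finset.univ \ (Pfin σ₀ i ∪ Ca G σ₀ i a b ∪ Bb G σ₀ i b)).toList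

lemma mem_bigL (v : V) : v ∈ bigL G σ₀ i a b := by
  simp only [bigL, List.mem_append, Finset.mem_toList, mem_block0, Finset.mem_sdiff,
    Finset.mem_union, Finset.mem_univ, true_and]
  by_cases h1 : v ∈ Pfin σ₀ i
  · tauto
  by_cases h2 : v ∈ Ca G σ₀ i a b
  · tauto
  by_cases h3 : v ∈ Bb G σ₀ i b
  · tauto
  · tauto

lemma nodup_bigL : (bigL G σ₀ i a b).Nodup := by
  rw [bigL]
  rw [List.nodup_append, List.nodup_append, List.nodup_append]
  refine ⟨⟨⟨nodup_block0 σ₀ i, Finset.nodup_toList _, ?_⟩, Finset.nodup_toList _, ?_⟩,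
    Finset.nodup_toList _, ?_⟩
  · rintro x hx _ hx' rfl
    rw [mem_block0] at hx
    rw [Finset.mem_toList, mem_Ca] at hx'
    exact hx'.2 hx
  · rintro x hx _ hx' rfl
    rw [Finset.mem_toList, Finset.mem_sdiff, mem_Bb] at hx'
    rcases List.mem_append.mp hx with hx | hx
    · rw [mem_block0] at hx
      exact hx'.1.2 hx
    · rw [Finset.mem_toList] at hx
      exact hx'.2 hx
  · rintro x hx _ hx' rfl
    rw [Finset.mem_toList, Finset.mem_sdiff, Finset.mem_union, Finset.mem_union] at hx'
    rcases List.mem_append.mp hx with hx | hx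
    · rcases List.mem_append.mp hx with hx | hx
      · rw [mem_block0] at hx
        exact hx'.2 (Or.inl (Or.inl hx))
      · rw [Finset.mem_toList] at hx
        exact hx'.2 (Or.inl (Or.inr hx))
    · rw [Finset.mem_toList, Finset.mem_sdiff] at hx
      exact hx'.2 (Or.inr hx.1)

lemma len_bigL : (bigL G σ₀ i a b).length = Fintype.card V := by
  rw [← List.toFinset_card_of_nodup (nodup_bigL G σ₀ i a b)]
  have : (bigL G σ₀ i a b).toFinset = Finset.univ :=
    Finset.eq_univ_iff_forall.mpr (fun v => List.mem_toFinset.mpr (mem_bigL G σ₀ i a b v))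
  rw [this, Finset.card_univ]

noncomputable def tau : Fin (Fintype.card V) ≃ V :=
  (finCongr (len_bigL G σ₀ i a b).symm).trans
    (List.Nodup.getEquivOfForallMemList _ (nodup_bigL G σ₀ i a b) (mem_bigL G σ₀ i a b))

lemma tau_apply (l : ℕ) (hl : l < Fintype.card V) :
    tau G σ₀ i a b ⟨l, hl⟩ =
      (bigL G σ₀ i a b)[l]'(by rw [len_bigL]; exact hl) := rfl

lemma tau_prefix (j : Fin (Fintype.card V)) (hj : j ≤ i) : tau G σ₀ i a b j = σ₀ j := by
  have hj' : j.val < (block0 σ₀ i).length := by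
    rw [block0, List.length_ofFn]
    exact Nat.lt_succ_iff.mpr (Fin.le_def.mp hj)
  have h1 : tau G σ₀ i a b j = tau G σ₀ i a b ⟨j.val, j.2⟩ := rfl
  rw [h1, tau_apply]
  simp only [bigL]
  rw [List.getElem_append_left (by
      rw [List.length_append, List.length_append]
      omega),
    List.getElem_append_left (by rw [List.length_append]; omega),
    List.getElem_append_left hj']
  simp only [block0, List.getElem_ofFn]

lemma tau_mem_of_lt_k1 (l : ℕ) (hl : l < Fintype.card V)
    (h : l < (block0 σ₀ i ++ (Ca G σ₀ i a b).toList).length) :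
    tau G σ₀ i a b ⟨l, hl⟩ ∈ Pfin σ₀ i ∨ tau G σ₀ i a b ⟨l, hl⟩ ∈ Ca G σ₀ i a b := by
  rw [tau_apply]
  simp only [bigL]
  rw [List.getElem_append_left (by rw [List.length_append]; omega),
    List.getElem_append_left h]
  have := List.getElem_mem h
  rcases List.mem_append.mp this with hm | hm
  · exact Or.inl ((mem_block0 σ₀ i).mp hm)
  · exact Or.inr (Finset.mem_toList.mp hm)

lemma tau_mem_of_lt_k2 (l : ℕ) (hl : l < Fintype.card V)
    (h : l < ((block0 σ₀ i ++ (Ca G σ₀ i a b).toList) ++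
      (Bb G σ₀ i b \ Ca G σ₀ i a b).toList).length) :
    tau G σ₀ i a b ⟨l, hl⟩ ∈ Pfin σ₀ i ∨ tau G σ₀ i a b ⟨l, hl⟩ ∈ Ca G σ₀ i a b ∨
      tau G σ₀ i a b ⟨l, hl⟩ ∈ Bb G σ₀ i b := by
  rw [tau_apply]
  simp only [bigL]
  rw [List.getElem_append_left h]
  have := List.getElem_mem h
  rcases List.mem_append.mp this with hm | hm
  · rcases List.mem_append.mp hm with hm | hm
    · exact Or.inl ((mem_block0 σ₀ i).mp hm)
    · exact Or.inr (Or.inl (Finset.mem_toList.mp hm))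
  · exact Or.inr (Or.inr (Finset.mem_sdiff.mp (Finset.mem_toList.mp hm)).1)

lemma bigL_len_ge :
    ((block0 σ₀ i ++ (Ca G σ₀ i a b).toList) ++ (Bb G σ₀ i b \ Ca G σ₀ i a b).toList).length
      ≤ Fintype.card V := by
  rw [← len_bigL G σ₀ i a b]
  simp only [bigL, List.length_append]
  omega

lemma pos_tau_lt_k1 (u : V) (hu : u ∈ Ca G σ₀ i a b) :
    ((tau G σ₀ i a b).symm u).val < (block0 σ₀ i ++ (Ca G σ₀ i a b).toList).length := by
  have humem : u ∈ block0 σ₀ i ++ (Ca G σ₀ i a b).toList :=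
    List.mem_append.mpr (Or.inr (Finset.mem_toList.mpr hu))
  obtain ⟨m, hm, hget⟩ := List.mem_iff_getElem.mp humem
  have hmn : m < Fintype.card V := by
    have h1 := bigL_len_ge G σ₀ i a b
    rw [List.length_append] at h1
    omega
  have htau : tau G σ₀ i a b ⟨m, hmn⟩ = u := by
    rw [tau_apply]
    simp only [bigL]
    rw [List.getElem_append_left (by rw [List.length_append]; omega),
      List.getElem_append_left hm]
    exact hget
  have : (tau G σ₀ i a b).symm u = ⟨m, hmn⟩ := by
    rw [← htau, Equiv.symm_apply_apply]
  rw [this]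
  exact hm

lemma pos_tau_lt_k2 (u : V) (hu : u ∈ Bb G σ₀ i b) :
    ((tau G σ₀ i a b).symm u).val < ((block0 σ₀ i ++ (Ca G σ₀ i a b).toList) ++
      (Bb G σ₀ i b \ Ca G σ₀ i a b).toList).length := by
  by_cases hC : u ∈ Ca G σ₀ i a b
  · have := pos_tau_lt_k1 G σ₀ i a b u hC
    rw [List.length_append]
    omega
  have humem : u ∈ (block0 σ₀ i ++ (Ca G σ₀ i a b).toList) ++
      (Bb G σ₀ i b \ Ca G σ₀ i a b).toList :=
    List.mem_append.mpr (Or.inr (Finset.mem_toList.mpr (Finset.mem_sdiff.mpr ⟨hu, hC⟩)))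
  obtain ⟨m, hm, hget⟩ := List.mem_iff_getElem.mp humem
  have hmn : m < Fintype.card V := lt_of_lt_of_le hm (bigL_len_ge G σ₀ i a b)
  have htau : tau G σ₀ i a b ⟨m, hmn⟩ = u := by
    rw [tau_apply]
    simp only [bigL]
    rw [List.getElem_append_left hm]
    exact hget
  have : (tau G σ₀ i a b).symm u = ⟨m, hmn⟩ := by
    rw [← htau, Equiv.symm_apply_apply]
  rw [this]
  exact hm

lemma key
    (ha : ∀ j, j ≤ i → G.Adj (σ₀ j) a) (hb : ∀ j, j ≤ i → G.Adj (σ₀ j) b)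
    (hV : ∀ v, (∀ j, j ≤ i → G.Adj (σ₀ j) v) → v = a ∨ v = b)
    (σ : Fin (Fintype.card V) ≃ V) (hpre : ∀ j, j ≤ i → σ j = σ₀ j)
    (hf : fdrop G σ a ≤ fdrop G σ b) :
    Gsigma G σ ≤ Gsigma G (tau G σ₀ i a b) := by
  set τ := tau G σ₀ i a b with hτdef
  have main : ∀ x y : V, (σ.symm x).val < fdrop G σ y →
      (τ.symm x).val < fdrop G τ y ∨ (τ.symm y).val < fdrop G τ x := by
    intro x y hlt
    set p := (σ.symm x).val with hp
    have hpn : p < Fintype.card V := (σ.symm x).2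
    have hx : σ ⟨p, hpn⟩ = x := by
      have : (⟨p, hpn⟩ : Fin (Fintype.card V)) = σ.symm x := rfl
      rw [this, Equiv.apply_symm_apply]
    by_cases hpi : p ≤ i.val
    · -- prefix case
      have hxt : τ ⟨p, hpn⟩ = x := by
        rw [hτdef, tau_prefix G σ₀ i a b ⟨p, hpn⟩ (Fin.le_def.mpr hpi),
          ← hpre ⟨p, hpn⟩ (Fin.le_def.mpr hpi)]
        exact hx
      have hsymm : (τ.symm x).val = p := by rw [← hxt, Equiv.symm_apply_apply]
      left
      rw [hsymm, lt_fdrop_iff]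
      intro l hl hlm
      have hli : l ≤ i.val := le_trans hlm hpi
      rw [hτdef, tau_prefix G σ₀ i a b ⟨l, hl⟩ (Fin.le_def.mpr hli),
        ← hpre ⟨l, hl⟩ (Fin.le_def.mpr hli)]
      exact (lt_fdrop_iff G σ y _).mp hlt l hl hlm
    · push_neg at hpi
      have hally : ∀ j, j ≤ i → G.Adj (σ₀ j) y := by
        intro j hj
        have h1 := (lt_fdrop_iff G σ y _).mp hlt j.val j.2
          (le_trans (Fin.le_def.mp hj) (le_of_lt hpi))
        have h2 : σ ⟨j.val, j.2⟩ = σ₀ j := by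
          have : (⟨j.val, j.2⟩ : Fin (Fintype.card V)) = j := rfl
          rw [this, hpre j hj]
        rwa [h2] at h1
      have hxy : G.Adj x y := by
        have := (lt_fdrop_iff G σ y _).mp hlt p hpn le_rfl
        rwa [hx] at this
      have hxP : x ∉ Pfin σ₀ i := by
        rw [mem_Pfin]
        rintro ⟨j, hj, hjx⟩
        have h1 : σ j = x := by rw [hpre j hj, hjx]
        have h2 : σ.symm x = j := by rw [← h1, Equiv.symm_apply_apply]
        have : p = j.val := by rw [hp, h2]
        have := Fin.le_def.mp hj
        omega
      rcases hV y hally with rfl | rfl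
      · -- y = a
        have hxb : G.Adj x b := by
          have := (lt_fdrop_iff G σ b _).mp (lt_of_lt_of_le hlt hf) p hpn le_rfl
          rwa [hx] at this
        have hxCa : x ∈ Ca G σ₀ i y b := (mem_Ca G σ₀ i y b).mpr ⟨⟨hxy.symm, hxb.symm⟩, hxP⟩
        left
        have h1 := pos_tau_lt_k1 G σ₀ i y b x hxCa
        rw [lt_fdrop_iff]
        intro l hl hlm
        rcases tau_mem_of_lt_k1 G σ₀ i y b l hl (lt_of_le_of_lt hlm h1) with hP | hC
        · obtain ⟨j, hj, hjτ⟩ := (mem_Pfin σ₀ i).mp hP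
          exact hjτ ▸ ha j hj
        · exact ((mem_Ca G σ₀ i y b).mp hC).1.1.symm
      · -- y = b
        have hxBb : x ∈ Bb G σ₀ i y := (mem_Bb G σ₀ i y).mpr ⟨hxy.symm, hxP⟩
        left
        have h1 := pos_tau_lt_k2 G σ₀ i a y x hxBb
        rw [lt_fdrop_iff]
        intro l hl hlm
        rcases tau_mem_of_lt_k2 G σ₀ i a y l hl (lt_of_le_of_lt hlm h1) with hP | hC | hB
        · obtain ⟨j, hj, hjτ⟩ := (mem_Pfin σ₀ i).mp hP
          exact hjτ ▸ hb j hj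
        · exact ((mem_Ca G σ₀ i a y).mp hC).1.2.symm
        · exact ((mem_Bb G σ₀ i y).mp hB).1.symm
  intro u v huv
  rw [gsigma_adj] at huv ⊢
  refine ⟨huv.1, ?_⟩
  rcases huv.2 with h | h
  · exact main u v h
  · exact (main v u h).symm

end AtMostTwo

/-- If `|N⁺(v_i)| = 2` for a prefix, at most two maximal interval-order subgraphs extend it. -/
theorem at_most_two_extensions {V : Type*} [Fintype V] (G : SimpleGraph V)
    (σ₀ : Fin (Fintype.card V) ≃ V) (i : Fin (Fintype.card V))
    (hcard : (Vset G σ₀ i).ncard = 2) :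
    Set.ncard {H : SimpleGraph V |
      (∃ σ : Fin (Fintype.card V) ≃ V, (∀ j, j ≤ i → σ j = σ₀ j) ∧ H = Gsigma G σ) ∧
      H ≤ G ∧ IsIntervalGraph Hᶜ ∧
      (∀ H', H' ≤ G → IsIntervalGraph H'ᶜ → H ≤ H' → H' = H)} ≤ 2 := by
  classical
  obtain ⟨a, b, hab, hVs⟩ := Set.ncard_eq_two.mp hcard
  have hmem : ∀ v : V, (∀ j, j ≤ i → G.Adj (σ₀ j) v) ↔ (v = a ∨ v = b) := by
    intro v
    have := Set.ext_iff.mp hVs v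
    simpa [Vset, Set.mem_insert_iff] using this
  have ha : ∀ j, j ≤ i → G.Adj (σ₀ j) a := (hmem a).mpr (Or.inl rfl)
  have hb : ∀ j, j ≤ i → G.Adj (σ₀ j) b := (hmem b).mpr (Or.inr rfl)
  set C1 := Gsigma G (AtMostTwo.tau G σ₀ i a b) with hC1
  set C2 := Gsigma G (AtMostTwo.tau G σ₀ i b a) with hC2
  have hsub : {H : SimpleGraph V |
      (∃ σ : Fin (Fintype.card V) ≃ V, (∀ j, j ≤ i → σ j = σ₀ j) ∧ H = Gsigma G σ) ∧
      H ≤ G ∧ IsIntervalGraph Hᶜ ∧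
      (∀ H', H' ≤ G → IsIntervalGraph H'ᶜ → H ≤ H' → H' = H)} ⊆ {C1, C2} := by
    rintro H ⟨⟨σ, hpre, rfl⟩, hle, hint, hmax⟩
    rcases le_total (AtMostTwo.fdrop G σ a) (AtMostTwo.fdrop G σ b) with hf | hf
    · left
      have h1 := AtMostTwo.key G σ₀ i a b ha hb (fun v hv => (hmem v).mp hv) σ hpre hf
      exact (hmax C1 (AtMostTwo.gsigma_le G _) (AtMostTwo.gsigma_compl_interval G _) h1).symm
    · right
      have h1 := AtMostTwo.key G σ₀ i b a hb ha (fun v hv => ((hmem v).mp hv).symm) σ hpre hf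
      exact (hmax C2 (AtMostTwo.gsigma_le G _) (AtMostTwo.gsigma_compl_interval G _) h1).symm
  refine le_trans (Set.ncard_le_ncard hsub ((Set.finite_singleton _).insert _)) ?_
  refine le_trans (Set.ncard_insert_le _ _) ?_
  simp [Set.ncard_singleton]
end
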